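/- For 1 ≤ i ≤ n−1 let T_i denote the operator on formal power series in the variables y_1, y_2, … over R(T) that applies the Demazure operator f ↦ (1 − e^{a_i − a_{i+1}})^{−1}·(s_i(f) − f) to each coefficient, where s_i exchanges e^{a_i} and e^{a_{i+1}}. Then for every 1 ≤ l ≤ n−1, T_l T_{l−1} ⋯ T_1 (Ω(b_1|y)) = e^{−(a_1 + ⋯ + a_l)} · Σ_{r ≥ 0} h_r(b_1, …, b_{l+1}) · h_{l+r}(y), where h_r(b_1,…,b_{l+1}) ∈ R(T) is the complete homogeneous symmetric polynomial of degree r in b_1,…,b_{l+1}, and h_m(y) is the power series equal to the sum of all monomials of total degree m in the y-variables. -/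

import Mathlib

noncomputable section

/-- `R(T) = ℤ[e^{±a_1},…,e^{±a_n}]`, the group algebra over `ℤ` of the free abelian
group `ℤⁿ` of characters. -/
abbrev RT (n : ℕ) : Type := AddMonoidAlgebra ℤ (Fin n →₀ ℤ)

instance (n : ℕ) : IsDomain (RT n) := NoZeroDivisors.to_isDomain _

/-- `e^λ` for a character `λ`. -/
def eexp (n : ℕ) (lam : Fin n →₀ ℤ) : RT n := AddMonoidAlgebra.single lam 1

/-- `b_i = 1 - e^{-a_i}`. -/
def bb (n : ℕ) (i : Fin n) : RT n := 1 - eexp n (-(Finsupp.single i 1))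

/-- The ring automorphism of `R(T)` induced by a permutation of the variables:
`e^{a_i} ↦ e^{a_{σ(i)}}`. -/
def permRT (n : ℕ) (σ : Equiv.Perm (Fin n)) : RT n ≃ₐ[ℤ] RT n :=
  AddMonoidAlgebra.domCongr ℤ ℤ (Finsupp.domCongr (σ : Fin n ≃ Fin n))

/-- Index set of the variables `z_{ij}`, `1 ≤ i ≤ j ≤ n`. -/
abbrev Idx (n : ℕ) : Type := {p : Fin n × Fin n // p.1 ≤ p.2}

/-- An element of `Idx n` from natural-number data. -/
def mkIdx (n : ℕ) (a b : ℕ) (ha : a < n) (hb : b < n) (hab : a ≤ b) : Idx n :=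
  ⟨(⟨a, ha⟩, ⟨b, hb⟩), Fin.mk_le_mk.mpr hab⟩

/-- The defining relation `(b_i - b_j)·z_{ij} - z_{i,j-1} + z_{i+1,j}` (0-based indices). -/
def relGen (n : ℕ) (i j : ℕ) (hi : i < n) (hj : j < n) (hij : i < j) :
    MvPolynomial (Idx n) (RT n) :=
  MvPolynomial.C (bb n ⟨i, hi⟩ - bb n ⟨j, hj⟩) * MvPolynomial.X (mkIdx n i j hi hj hij.le)
    - MvPolynomial.X (mkIdx n i (j - 1) hi (by omega) (by omega))
    + MvPolynomial.X (mkIdx n (i + 1) j (by omega) hj (by omega))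

/-- The ideal of relations of the centralizer family. -/
def centIdeal (n : ℕ) : Ideal (MvPolynomial (Idx n) (RT n)) :=
  Ideal.span {f | ∃ (i j : ℕ) (hi : i < n) (hj : j < n) (hij : i < j), f = relGen n i j hi hj hij}

/-- The ring `R = R(T)[z_{ij}]/I`. -/
abbrev centRing (n : ℕ) : Type := MvPolynomial (Idx n) (RT n) ⧸ centIdeal n

/-- The class of the generator `z_{ij}` in `R` (0-based indices). -/
def zbar (n : ℕ) (i j : ℕ) (hi : i < n) (hj : j < n) (hij : i ≤ j) : centRing n :=
  Ideal.Quotient.mk (centIdeal n) (MvPolynomial.X (mkIdx n i j hi hj hij))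


/-- `Ω(b|y)`: the formal power series in `y_1, y_2, …` whose coefficient on each monomial of
total degree `d` is `b^d`, i.e. `∏_{j ≥ 1} (1 - b y_j)⁻¹`. -/
def Omg (n : ℕ) (b : RT n) : MvPowerSeries ℕ (RT n) :=
  fun d => b ^ (d.sum fun _ k => k)

/-- The complete homogeneous symmetric polynomial of degree `r` in the values `x_1,…,x_k`. -/
def hsym {R : Type*} [CommSemiring R] {k : ℕ} (x : Fin k → R) (r : ℕ) : R :=
  ∑ s : Sym (Fin k) r, ((s : Multiset (Fin k)).map x).prod

/-- Iterated coefficientwise application: `demIter T F0 l = T_l(T_{l-1}(⋯ T_1(F0)⋯))`,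
where each `T_i` acts on a power series coefficient by coefficient. -/
def demIter (n : ℕ) (T : ℕ → RT n →ₗ[ℤ] RT n) (F0 : MvPowerSeries ℕ (RT n)) :
    ℕ → MvPowerSeries ℕ (RT n)
  | 0 => F0
  | m + 1 => fun d => T (m + 1) (demIter n T F0 m d)


section PSlemmas
open PowerSeries
variable {R : Type*} [CommRing R]

def geomS (u : R) : PowerSeries R := PowerSeries.mk fun j => u ^ j

lemma geomS_unit (u : R) : (1 - PowerSeries.C u * X) * geomS u = 1 := by
  ext n
  rw [sub_mul, one_mul, map_sub, mul_assoc, mul_comm (X : PowerSeries R), ← mul_assoc]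
  cases n with
  | zero => simp [geomS]
  | succ n => simp [geomS, coeff_succ_mul_X, pow_succ, mul_comm]

lemma geomS_sub (u v : R) :
    geomS u - geomS v
      = (PowerSeries.C u - PowerSeries.C v) * X * (geomS u * geomS v) := by
  linear_combination geomS v * geomS_unit u - geomS u * geomS_unit v

lemma hsym_eq_coeff {k : ℕ} (x : Fin k → R) (r : ℕ) :
    hsym x r = PowerSeries.coeff r (∏ i : Fin k, geomS (x i)) := by
  rw [PowerSeries.coeff_prod]
  unfold hsym
  refine Finset.sum_bij' (fun s _ => Multiset.toFinsupp (s : Multiset (Fin k)))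
    (fun f hf => ⟨f.toMultiset, ?_⟩) ?_ ?_ ?_ ?_ ?_
  · rw [Finsupp.card_toMultiset]
    simp only [Finset.mem_finsuppAntidiag] at hf
    rw [← hf.1, Finsupp.sum_fintype _ _ (fun _ => rfl)]
    simp
  · intro s _
    simp only [Finset.mem_finsuppAntidiag]
    constructor
    · have h1 := Multiset.toFinsupp_sum_eq (s : Multiset (Fin k))
      rw [Finsupp.sum_fintype _ _ (fun _ => rfl)] at h1
      exact h1.trans s.2
    · exact Finset.subset_univ _
  · intro f hf; exact Finset.mem_univ _
  · intro s _; simp [Sym.ext_iff]; rfl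
  · intro f hf; simp
  · intro s _
    simp only [geomS, coeff_mk]
    rw [Finset.prod_multiset_map_count]
    refine Finset.prod_subset (Finset.subset_univ _) ?_
    · intro i _ hi
      simp only [Multiset.mem_toFinset, ← Multiset.count_pos, not_lt, Nat.le_zero] at hi
      simp [hi]

lemma coeff_geomS_sub_key (F : PowerSeries R) (u v : R) (m : ℕ) :
    PowerSeries.coeff m (F * geomS v) - PowerSeries.coeff m (F * geomS u)
      = (v - u) * (if 1 ≤ m then
          PowerSeries.coeff (m - 1) (F * geomS u * geomS v) else 0) := by
  rw [← map_sub, ← mul_sub, geomS_sub]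
  have h : F * ((PowerSeries.C v - PowerSeries.C u) * X * (geomS v * geomS u))
      = (PowerSeries.C (v - u) * (F * geomS u * geomS v)) * X := by
    rw [map_sub]; ring
  rw [h]
  cases m with
  | zero => simp
  | succ m =>
    rw [coeff_succ_mul_X, coeff_C_mul]
    simp

lemma hsym_sub_snoc {k : ℕ} (x : Fin k → R) (u v : R) (m : ℕ) :
    hsym (Fin.snoc x v) m - hsym (Fin.snoc x u) m
      = (v - u) * (if 1 ≤ m then hsym (Fin.snoc (Fin.snoc x u) v) (m - 1) else 0) := by
  rw [hsym_eq_coeff, hsym_eq_coeff, hsym_eq_coeff,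
      Fin.prod_univ_castSucc (f := fun i => geomS (Fin.snoc x v i)),
      Fin.prod_univ_castSucc (f := fun i => geomS (Fin.snoc x u i)),
      Fin.prod_univ_castSucc (f := fun i => geomS (Fin.snoc (Fin.snoc x u) v i))]
  simp only [Fin.snoc_castSucc, Fin.snoc_last]
  rw [Fin.prod_univ_castSucc (f := fun i => geomS (Fin.snoc x u i))]
  simp only [Fin.snoc_castSucc, Fin.snoc_last]
  exact coeff_geomS_sub_key _ u v m

lemma hsym_fin_one (x : Fin 1 → R) (m : ℕ) : hsym x m = x 0 ^ m := by
  rw [hsym_eq_coeff, Fin.prod_univ_one]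
  simp [geomS]

lemma map_hsym {S : Type*} [CommRing S] {F : Type*} [FunLike F R S] [RingHomClass F R S]
    (φ : F) {k : ℕ} (x : Fin k → R) (r : ℕ) :
    φ (hsym x r) = hsym (fun i => φ (x i)) r := by
  unfold hsym
  rw [map_sum]
  refine Finset.sum_congr rfl fun s _ => ?_
  rw [map_multiset_prod, Multiset.map_map]
  rfl
end PSlemmas

section RTlemmas

lemma eexp_mul (n : ℕ) (μ ν : Fin n →₀ ℤ) : eexp n μ * eexp n ν = eexp n (μ + ν) := by
  simp [eexp, AddMonoidAlgebra.single_mul_single]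

lemma permRT_eexp (n : ℕ) (σ : Equiv.Perm (Fin n)) (lam : Fin n →₀ ℤ) :
    permRT n σ (eexp n lam) = eexp n (Finsupp.domCongr (M := ℤ) σ lam) := by
  simp [permRT, eexp]

lemma one_sub_eexp_ne (n : ℕ) {μ : Fin n →₀ ℤ} (h : μ ≠ 0) : (1 : RT n) - eexp n μ ≠ 0 := by
  rw [sub_ne_zero]
  intro h1
  rw [eexp, AddMonoidAlgebra.one_def] at h1
  rcases AddMonoidAlgebra.single_inj.mp h1 with ⟨h2, _⟩ | ⟨h2, _⟩
  · exact h h2.symm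
  · exact one_ne_zero h2

lemma permRT_bb (n : ℕ) (σ : Equiv.Perm (Fin n)) (i : Fin n) :
    permRT n σ (bb n i) = bb n (σ i) := by
  rw [bb, map_sub, map_one, permRT_eexp, map_neg]
  simp [bb, Finsupp.domCongr_apply, Finsupp.equivMapDomain_single]

end RTlemmas

set_option maxHeartbeats 1000000 in
/-- with `T_i` (for `1 ≤ i ≤ n-1`) the coefficientwise Demazure operators on
`R(T)[[y_1, y_2, …]]`, one has, for `1 ≤ l ≤ n-1`,
`T_l T_{l-1} ⋯ T_1 (Ω(b_1|y)) = e^{-(a_1+⋯+a_l)} Σ_{r ≥ 0} h_r(b_1,…,b_{l+1}) h_{l+r}(y)`;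
the right-hand side is the series whose coefficient on a monomial of total degree `m` is
`e^{-(a_1+⋯+a_l)} h_{m-l}(b_1,…,b_{l+1})` for `m ≥ l`, and `0` otherwise. -/
theorem stmt16 (n : ℕ) (hn : 2 ≤ n) (T : ℕ → RT n →ₗ[ℤ] RT n)
    (hT : ∀ (i : ℕ) (hi1 : 1 ≤ i) (hi2 : i ≤ n - 1) (f : RT n),
      (1 - eexp n (Finsupp.single ⟨i - 1, by omega⟩ 1 - Finsupp.single ⟨i, by omega⟩ 1)) * T i f
        = permRT n (Equiv.swap ⟨i - 1, by omega⟩ ⟨i, by omega⟩) f - f)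
    (l : ℕ) (hl1 : 1 ≤ l) (hl2 : l ≤ n - 1) :
    demIter n T (Omg n (bb n ⟨0, by omega⟩)) l
      = fun d =>
          eexp n (-(∑ m : Fin l, Finsupp.single (⟨(m : ℕ), by have := m.isLt; omega⟩ : Fin n) 1))
            * (if l ≤ d.sum (fun _ k => k)
                then hsym (fun t : Fin (l + 1) =>
                      bb n ⟨(t : ℕ), by have := t.isLt; omega⟩) (d.sum (fun _ k => k) - l)
                else 0) := by
  revert hl2
  induction l, hl1 using Nat.le_induction with
  | base =>
    intro hl2
    funext d
    have h0 : (0:ℕ) < n := by omega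
    have h1 : (1:ℕ) < n := by omega
    set z0 : Fin n := ⟨0, h0⟩ with hz0
    set z1 : Fin n := ⟨1, h1⟩ with hz1
    set m := d.sum fun _ k => k with hm
    show T 1 (bb n z0 ^ m) = _
    have hμ : (Finsupp.single z0 (1:ℤ) - Finsupp.single z1 1) ≠ 0 := by
      intro h
      rcases (Finsupp.single_eq_single_iff _ _ _ _).mp (sub_eq_zero.mp h) with ⟨h2, _⟩ | ⟨h2, _⟩
      · exact absurd (congrArg Fin.val h2) (by simp [hz0, hz1])
      · exact one_ne_zero h2
    apply mul_left_cancel₀ (one_sub_eexp_ne n hμ)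
    rw [show (1 : RT n) - eexp n (Finsupp.single z0 1 - Finsupp.single z1 1)
          = 1 - eexp n (Finsupp.single ⟨1-1, by omega⟩ 1 - Finsupp.single ⟨1, by omega⟩ 1) from rfl,
        hT 1 le_rfl (by omega)]
    have e10 : (⟨1 - 1, by omega⟩ : Fin n) = z0 := rfl
    simp only [e10]
    rw [map_pow, permRT_bb, Equiv.swap_apply_left]
    beta_reduce
    have hE : eexp n (-(∑ mm : Fin 1,
          Finsupp.single (⟨(mm:ℕ), by have := mm.isLt; omega⟩ : Fin n) (1:ℤ)))
        = eexp n (-(Finsupp.single z0 1)) := by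
      congr 1
      rw [Fin.sum_univ_one]
      rfl
    rw [hE]
    have hmul : (1 - eexp n (Finsupp.single z0 1 - Finsupp.single z1 1))
        * eexp n (-(Finsupp.single z0 1)) = bb n z1 - bb n z0 := by
      rw [sub_mul, one_mul, eexp_mul]
      have h3 : Finsupp.single z0 (1:ℤ) - Finsupp.single z1 1 + -(Finsupp.single z0 1)
          = -(Finsupp.single z1 1) := by abel
      rw [h3, bb, bb]
      ring
    rw [← mul_assoc, hmul]
    have hfam : (fun t : Fin (1 + 1) => bb n ⟨(t:ℕ), by have := t.isLt; omega⟩)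
        = Fin.snoc (Fin.snoc Fin.elim0 (bb n z0)) (bb n z1) := by
      funext t
      refine Fin.lastCases ?_ ?_ t
      · rfl
      · intro i
        refine Fin.cases ?_ (fun j => j.elim0) i
        · rfl
    rw [hfam]
    have hone : ∀ u : RT n, hsym (Fin.snoc (Fin.elim0) u) m = u ^ m := by
      intro u
      rw [hsym_fin_one]
      rfl
    have hk := hsym_sub_snoc (Fin.elim0 : Fin 0 → RT n) (bb n z0) (bb n z1) m
    rw [hone, hone] at hk
    exact hk
  | succ l hl ih =>
    intro hl2
    have hln : l < n := by omega
    have hl1n : l + 1 < n := by omega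
    funext d
    set zl : Fin n := ⟨l, hln⟩ with hzl
    set zl1 : Fin n := ⟨l + 1, hl1n⟩ with hzl1
    set m := d.sum fun _ k => k with hm
    show T (l + 1) (demIter n T (Omg n (bb n ⟨0, by omega⟩)) l d) = _
    rw [congrFun (ih (by omega)) d]
    set x : Fin l → RT n := fun t => bb n ⟨(t:ℕ), by have := t.isLt; omega⟩ with hx
    have hfam1 : (fun t : Fin (l + 1) => bb n (⟨(t:ℕ), by have := t.isLt; omega⟩ : Fin n))
        = Fin.snoc x (bb n zl) := by
      funext t
      refine Fin.lastCases ?_ ?_ t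
      · rw [Fin.snoc_last]
        rfl
      · intro i
        rw [Fin.snoc_castSucc]
        rfl
    have hfam2 : (fun t : Fin (l + 1 + 1) => bb n (⟨(t:ℕ), by have := t.isLt; omega⟩ : Fin n))
        = Fin.snoc (Fin.snoc x (bb n zl)) (bb n zl1) := by
      funext t
      refine Fin.lastCases ?_ ?_ t
      · rw [Fin.snoc_last]
        rfl
      · intro i
        rw [Fin.snoc_castSucc]
        refine Fin.lastCases ?_ ?_ i
        · rw [Fin.snoc_last]
          rfl
        · intro j
          rw [Fin.snoc_castSucc]
          rfl
    rw [hfam1]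
    have hμ : (Finsupp.single zl (1:ℤ) - Finsupp.single zl1 1) ≠ 0 := by
      intro h
      rcases (Finsupp.single_eq_single_iff _ _ _ _).mp (sub_eq_zero.mp h) with ⟨h2, _⟩ | ⟨h2, _⟩
      · have h3 := congrArg Fin.val h2
        simp [hzl, hzl1] at h3
      · exact one_ne_zero h2
    apply mul_left_cancel₀ (one_sub_eexp_ne n hμ)
    rw [show (1 : RT n) - eexp n (Finsupp.single zl 1 - Finsupp.single zl1 1)
          = 1 - eexp n (Finsupp.single ⟨(l+1)-1, by omega⟩ 1 - Finsupp.single ⟨l+1, by omega⟩ 1)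
          from rfl,
        hT (l+1) (by omega) (by omega)]
    have esw : (⟨l + 1 - 1, by omega⟩ : Fin n) = zl := rfl
    have esw2 : (⟨l + 1, by omega⟩ : Fin n) = zl1 := rfl
    simp only [esw, esw2]
    rw [map_mul]
    have hsEl : permRT n (Equiv.swap zl zl1)
        (eexp n (-(∑ mm : Fin l,
          Finsupp.single (⟨(mm:ℕ), by have := mm.isLt; omega⟩ : Fin n) (1:ℤ))))
        = eexp n (-(∑ mm : Fin l,
          Finsupp.single (⟨(mm:ℕ), by have := mm.isLt; omega⟩ : Fin n) (1:ℤ))) := by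
      rw [permRT_eexp]
      congr 1
      rw [map_neg, map_sum]
      congr 1
      refine Finset.sum_congr rfl fun i _ => ?_
      have hi := i.isLt
      rw [Finsupp.domCongr_apply, Finsupp.equivMapDomain_single,
          Equiv.swap_apply_of_ne_of_ne (Fin.ne_of_val_ne (show (i:ℕ) ≠ l from by omega))
            (Fin.ne_of_val_ne (show (i:ℕ) ≠ l + 1 from by omega))]
    rw [hsEl]
    have hsx : (fun i => permRT n (Equiv.swap zl zl1)
          ((Fin.snoc x (bb n zl) : Fin (l + 1) → RT n) i))
        = (Fin.snoc x (bb n zl1) : Fin (l + 1) → RT n) := by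
      funext i
      refine Fin.lastCases ?_ ?_ i
      · rw [Fin.snoc_last, Fin.snoc_last, permRT_bb, Equiv.swap_apply_left]
      · intro j
        have hj := j.isLt
        simp only [Fin.snoc_castSucc, hx]
        rw [permRT_bb, Equiv.swap_apply_of_ne_of_ne (Fin.ne_of_val_ne (show (j:ℕ) ≠ l from by omega))
            (Fin.ne_of_val_ne (show (j:ℕ) ≠ l + 1 from by omega))]
    have hscite : permRT n (Equiv.swap zl zl1)
        (if l ≤ m then hsym (Fin.snoc x (bb n zl)) (m - l) else 0)
        = if l ≤ m then hsym (Fin.snoc x (bb n zl1)) (m - l) else 0 := by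
      rw [apply_ite (permRT n (Equiv.swap zl zl1)), map_zero, map_hsym, hsx]
    rw [hscite]
    rw [hfam2]
    have hEsum : (∑ mm : Fin (l+1),
          Finsupp.single (⟨(mm:ℕ), by have := mm.isLt; omega⟩ : Fin n) (1:ℤ))
        = (∑ mm : Fin l,
            Finsupp.single (⟨(mm:ℕ), by have := mm.isLt; omega⟩ : Fin n) (1:ℤ))
          + Finsupp.single zl 1 := by
      rw [Fin.sum_univ_castSucc]
      congr 1
    rw [hEsum, neg_add, ← eexp_mul]
    have hmul : (1 - eexp n (Finsupp.single zl 1 - Finsupp.single zl1 1))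
        * eexp n (-(Finsupp.single zl 1)) = bb n zl1 - bb n zl := by
      rw [sub_mul, one_mul, eexp_mul]
      have h3 : Finsupp.single zl (1:ℤ) - Finsupp.single zl1 1 + -(Finsupp.single zl 1)
          = -(Finsupp.single zl1 1) := by abel
      rw [h3, bb, bb]
      ring
    have hkey : (if l ≤ m then hsym (Fin.snoc x (bb n zl1)) (m - l) else 0)
          - (if l ≤ m then hsym (Fin.snoc x (bb n zl)) (m - l) else 0)
        = (bb n zl1 - bb n zl)
          * (if l + 1 ≤ m then
              hsym (Fin.snoc (Fin.snoc x (bb n zl)) (bb n zl1)) (m - (l + 1)) else 0) := by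
      by_cases h : l ≤ m
      · rw [if_pos h, if_pos h, hsym_sub_snoc]
        congr 1
        by_cases h2 : l + 1 ≤ m
        · rw [if_pos (by omega : 1 ≤ m - l), if_pos h2, Nat.sub_sub]
        · rw [if_neg (by omega : ¬ 1 ≤ m - l), if_neg h2]
      · rw [if_neg h, if_neg h, if_neg (by omega : ¬ l + 1 ≤ m), sub_self, mul_zero]
    linear_combination eexp n (-(∑ mm : Fin l,
          Finsupp.single (⟨(mm:ℕ), by have := mm.isLt; omega⟩ : Fin n) (1:ℤ))) * hkey
      - (eexp n (-(∑ mm : Fin l,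
          Finsupp.single (⟨(mm:ℕ), by have := mm.isLt; omega⟩ : Fin n) (1:ℤ)))
        * (if l + 1 ≤ m then
              hsym (Fin.snoc (Fin.snoc x (bb n zl)) (bb n zl1)) (m - (l + 1)) else 0)) * hmul
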